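/- For the single-period robust newsvendor network, the worst-case profit is nondecreasing in the mean demand: if the mean vector increases from μ to μ + Δμ with Δμ ≥ 0 (translating the uncertainty set by Δμ), then the optimal worst-case profit does not decrease, provided the deterministic problem with demand Δμ yields nonnegative profit. -/
import Mathlib


open Matrix

/-- Inner worst-case-recourse value: `max { vᵀx − c_Pᵀd : x ≥ 0, R_S x ≤ s, R_D x ≤ d }`. -/
noncomputable def recourseVal {m n p : ℕ} (cP : Fin n → ℝ) (v : Fin p → ℝ)
    (RS : Matrix (Fin m) (Fin p) ℝ) (RD : Matrix (Fin n) (Fin p) ℝ)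
    (s : Fin m → ℝ) (d : Fin n → ℝ) : ℝ :=
  sSup ((fun x => v ⬝ᵥ x - cP ⬝ᵥ d) ''
    {x : Fin p → ℝ | (∀ j, 0 ≤ x j) ∧ RS.mulVec x ≤ s ∧ RD.mulVec x ≤ d})

/-- Optimal worst-case profit of the single-period robust newsvendor network
with uncertainty set `U`:
`max_{s ≥ 0} [ −(c_S + c_H)ᵀ s + min_{d ∈ U} max_{x feasible} (vᵀx − c_Pᵀd) ]`. -/
noncomputable def newsvendorVal {m n p : ℕ} (cS cH : Fin m → ℝ) (cP : Fin n → ℝ)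
    (v : Fin p → ℝ) (RS : Matrix (Fin m) (Fin p) ℝ) (RD : Matrix (Fin n) (Fin p) ℝ)
    (U : Set (Fin n → ℝ)) : ℝ :=
  sSup ((fun s => -((cS + cH) ⬝ᵥ s) + sInf ((recourseVal cP v RS RD s) '' U)) ''
    {s : Fin m → ℝ | ∀ i, 0 ≤ s i})

/-- the worst-case profit of the single-period robust newsvendor
network is nondecreasing in the mean demand: if the uncertainty set is shifted
by `Δμ ≥ 0` and the deterministic problem with demand `Δμ` has nonnegative
optimal profit, then the optimal worst-case profit does not decrease. -/
theorem stmt_2 (m n p : ℕ) (cS cH : Fin m → ℝ) (cP : Fin n → ℝ) (v : Fin p → ℝ)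
    (RS : Matrix (Fin m) (Fin p) ℝ) (RD : Matrix (Fin n) (Fin p) ℝ)
    (hcS : ∀ i, 0 ≤ cS i) (hcH : ∀ i, 0 ≤ cH i) (hcP : ∀ k, 0 ≤ cP k)
    (hv : ∀ j, 0 ≤ v j) (hRS : ∀ i j, 0 ≤ RS i j) (hRD : ∀ k j, 0 ≤ RD k j)
    (U : Set (Fin n → ℝ)) (hUc : IsCompact U) (hUne : U.Nonempty)
    (hUpos : ∀ d ∈ U, ∀ k, 0 ≤ d k)
    (Δμ : Fin n → ℝ) (hΔ : ∀ k, 0 ≤ Δμ k)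
    (hdet : 0 ≤ newsvendorVal cS cH cP v RS RD ({Δμ} : Set (Fin n → ℝ))) :
    newsvendorVal cS cH cP v RS RD U ≤
      newsvendorVal cS cH cP v RS RD ((fun d => d + Δμ) '' U) := by

  classical
  -- notation
  have hdp : ∀ (a b : Fin n → ℝ), (∀ k, 0 ≤ a k) → (∀ k, 0 ≤ b k) → 0 ≤ a ⬝ᵥ b :=
    fun a b ha hb => Finset.sum_nonneg fun k _ => mul_nonneg (ha k) (hb k)
  have hzeroF : ∀ (s : Fin m → ℝ) (d : Fin n → ℝ), (∀ i, 0 ≤ s i) → (∀ k, 0 ≤ d k) →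
      (0 : Fin p → ℝ) ∈ {x : Fin p → ℝ | (∀ j, 0 ≤ x j) ∧ RS.mulVec x ≤ s ∧ RD.mulVec x ≤ d} := by
    intro s d hs hd
    refine ⟨fun j => le_refl 0, ?_, ?_⟩
    · rw [Matrix.mulVec_zero]; exact fun i => hs i
    · rw [Matrix.mulVec_zero]; exact fun k => hd k
  have hImgne : ∀ (s : Fin m → ℝ) (d : Fin n → ℝ), (∀ i, 0 ≤ s i) → (∀ k, 0 ≤ d k) →
      ((fun x => v ⬝ᵥ x - cP ⬝ᵥ d) ''
        {x : Fin p → ℝ | (∀ j, 0 ≤ x j) ∧ RS.mulVec x ≤ s ∧ RD.mulVec x ≤ d}).Nonempty :=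
    fun s d hs hd => ⟨_, Set.mem_image_of_mem _ (hzeroF s d hs hd)⟩
  by_cases hA : ∃ j, 0 < v j ∧ (∀ i, RS i j = 0) ∧ (∀ k, RD k j = 0)
  · -- Case A: profit is unbounded for every (s, d) ≥ 0, both sides are junk-equal
    obtain ⟨j, hvj, hRSj, hRDj⟩ := hA
    have hrec0 : ∀ (s : Fin m → ℝ) (d : Fin n → ℝ), (∀ i, 0 ≤ s i) → (∀ k, 0 ≤ d k) →
        recourseVal cP v RS RD s d = 0 := by
      intro s d hs hd
      apply Real.sSup_of_not_bddAbove
      rintro ⟨M, hM⟩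
      set t : ℝ := max 0 ((M + cP ⬝ᵥ d + 1) / v j) with ht
      have h0t : 0 ≤ t := le_max_left _ _
      have hmem : (Pi.single j t : Fin p → ℝ) ∈
          {x : Fin p → ℝ | (∀ j, 0 ≤ x j) ∧ RS.mulVec x ≤ s ∧ RD.mulVec x ≤ d} := by
        refine ⟨fun j' => ?_, ?_, ?_⟩
        · rcases eq_or_ne j' j with rfl | hne
          · simpa using h0t
          · simp [Pi.single_apply, hne]
        · rw [Matrix.mulVec_single]
          intro i; simpa [hRSj i] using hs i
        · rw [Matrix.mulVec_single]
          intro k; simpa [hRDj k] using hd k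
      have h1 : v ⬝ᵥ Pi.single j t - cP ⬝ᵥ d ≤ M :=
        hM (Set.mem_image_of_mem (fun x => v ⬝ᵥ x - cP ⬝ᵥ d) hmem)
      rw [dotProduct_single] at h1
      have h2 : (M + cP ⬝ᵥ d + 1) / v j ≤ t := le_max_right _ _
      have h3 : M + cP ⬝ᵥ d + 1 ≤ t * v j := (div_le_iff₀ hvj).mp h2
      rw [mul_comm] at h3
      linarith
    have key : ∀ (V : Set (Fin n → ℝ)), V.Nonempty → (∀ d ∈ V, ∀ k, 0 ≤ d k) →
        newsvendorVal cS cH cP v RS RD V =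
          sSup ((fun s => -((cS + cH) ⬝ᵥ s) + 0) '' {s : Fin m → ℝ | ∀ i, 0 ≤ s i}) := by
      intro V hVne hVpos
      unfold newsvendorVal
      congr 1
      apply Set.image_congr
      intro s hs
      have himg : (recourseVal cP v RS RD s) '' V = {0} := by
        have h1 : ∀ d ∈ V, recourseVal cP v RS RD s d = (fun _ => (0:ℝ)) d :=
          fun d hd => hrec0 s d hs (hVpos d hd)
        rw [Set.image_congr h1, Set.Nonempty.image_const hVne]
      rw [himg, csInf_singleton]
    rw [key U hUne hUpos, key _ (hUne.image _)
      (by rintro d' ⟨d, hd, rfl⟩ k; exact add_nonneg (hUpos d hd k) (hΔ k))]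
  · -- Case B: every recourse image is bounded above
    push_neg at hA
    have hbdd : ∀ (s : Fin m → ℝ) (d : Fin n → ℝ), (∀ i, 0 ≤ s i) → (∀ k, 0 ≤ d k) →
        BddAbove ((fun x => v ⬝ᵥ x - cP ⬝ᵥ d) ''
          {x : Fin p → ℝ | (∀ j, 0 ≤ x j) ∧ RS.mulVec x ≤ s ∧ RD.mulVec x ≤ d}) := by
      intro s d hs hd
      have hu : ∀ j : Fin p, ∃ u : ℝ, ∀ x : Fin p → ℝ,
          ((∀ j', 0 ≤ x j') ∧ RS.mulVec x ≤ s ∧ RD.mulVec x ≤ d) → v j * x j ≤ u := by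
        intro j
        rcases eq_or_lt_of_le (hv j) with h0 | hpos
        · exact ⟨0, fun x hx => by rw [← h0, zero_mul]⟩
        · by_cases hcol : ∀ i, RS i j = 0
          · obtain ⟨k, hk⟩ := hA j hpos hcol
            have hkpos : 0 < RD k j := (hRD k j).lt_of_ne (Ne.symm hk)
            refine ⟨v j * (d k / RD k j), fun x hx => ?_⟩
            have h1 : RD k j * x j ≤ d k :=
              le_trans (Finset.single_le_sum (f := fun j' => RD k j' * x j')
                (fun j' _ => mul_nonneg (hRD k j') (hx.1 j')) (Finset.mem_univ j)) (hx.2.2 k)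
            have h2 : x j ≤ d k / RD k j :=
              (le_div_iff₀ hkpos).mpr (by linarith [mul_comm (RD k j) (x j)])
            exact mul_le_mul_of_nonneg_left h2 (hv j)
          · push_neg at hcol
            obtain ⟨i, hi⟩ := hcol
            have hipos : 0 < RS i j := (hRS i j).lt_of_ne (Ne.symm hi)
            refine ⟨v j * (s i / RS i j), fun x hx => ?_⟩
            have h1 : RS i j * x j ≤ s i :=
              le_trans (Finset.single_le_sum (f := fun j' => RS i j' * x j')
                (fun j' _ => mul_nonneg (hRS i j') (hx.1 j')) (Finset.mem_univ j)) (hx.2.1 i)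
            have h2 : x j ≤ s i / RS i j :=
              (le_div_iff₀ hipos).mpr (by linarith [mul_comm (RS i j) (x j)])
            exact mul_le_mul_of_nonneg_left h2 (hv j)
      choose u huu using hu
      refine ⟨∑ j, u j, ?_⟩
      rintro a ⟨x, hx, rfl⟩
      have h1 : v ⬝ᵥ x ≤ ∑ j, u j := Finset.sum_le_sum (fun j _ => huu j x hx)
      have h2 : 0 ≤ cP ⬝ᵥ d := hdp cP d hcP hd
      show v ⬝ᵥ x - cP ⬝ᵥ d ≤ ∑ j, u j
      linarith
    have hreclb : ∀ (s : Fin m → ℝ) (d : Fin n → ℝ), (∀ i, 0 ≤ s i) → (∀ k, 0 ≤ d k) →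
        -(cP ⬝ᵥ d) ≤ recourseVal cP v RS RD s d := by
      intro s d hs hd
      have h1 : v ⬝ᵥ (0 : Fin p → ℝ) - cP ⬝ᵥ d ≤ recourseVal cP v RS RD s d :=
        le_csSup (hbdd s d hs hd)
          (Set.mem_image_of_mem (fun x => v ⬝ᵥ x - cP ⬝ᵥ d) (hzeroF s d hs hd))
      simpa using h1
    obtain ⟨dC, hdC, hC⟩ := hUc.exists_isMaxOn hUne
      (Continuous.continuousOn
        (continuous_finset_sum Finset.univ fun k _ => continuous_const.mul (continuous_apply k)
          : Continuous fun d : Fin n → ℝ => cP ⬝ᵥ d))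
    have hCle : ∀ d ∈ U, cP ⬝ᵥ d ≤ cP ⬝ᵥ dC := fun d hd => hC hd
    -- superadditivity
    have hsuper : ∀ (s₁ s₂ : Fin m → ℝ) (x₂ : Fin p → ℝ) (d : Fin n → ℝ),
        (∀ i, 0 ≤ s₁ i) → (∀ i, 0 ≤ s₂ i) → (∀ k, 0 ≤ d k) →
        ((∀ j', 0 ≤ x₂ j') ∧ RS.mulVec x₂ ≤ s₂ ∧ RD.mulVec x₂ ≤ Δμ) →
        recourseVal cP v RS RD s₁ d + (v ⬝ᵥ x₂ - cP ⬝ᵥ Δμ) ≤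
          recourseVal cP v RS RD (s₁ + s₂) (d + Δμ) := by
      intro s₁ s₂ x₂ d hs₁ hs₂ hd hx₂
      have hmain : recourseVal cP v RS RD s₁ d ≤
          recourseVal cP v RS RD (s₁ + s₂) (d + Δμ) - (v ⬝ᵥ x₂ - cP ⬝ᵥ Δμ) := by
        refine csSup_le (hImgne s₁ d hs₁ hd) ?_
        rintro a ⟨x₁, hx₁, rfl⟩
        show v ⬝ᵥ x₁ - cP ⬝ᵥ d ≤
          recourseVal cP v RS RD (s₁ + s₂) (d + Δμ) - (v ⬝ᵥ x₂ - cP ⬝ᵥ Δμ)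
        have hmem : x₁ + x₂ ∈ {x : Fin p → ℝ | (∀ j, 0 ≤ x j) ∧
            RS.mulVec x ≤ s₁ + s₂ ∧ RD.mulVec x ≤ d + Δμ} := by
          refine ⟨fun j => add_nonneg (hx₁.1 j) (hx₂.1 j), ?_, ?_⟩
          · rw [Matrix.mulVec_add]; exact add_le_add hx₁.2.1 hx₂.2.1
          · rw [Matrix.mulVec_add]; exact add_le_add hx₁.2.2 hx₂.2.2
        have hval : v ⬝ᵥ (x₁ + x₂) - cP ⬝ᵥ (d + Δμ) ≤
            recourseVal cP v RS RD (s₁ + s₂) (d + Δμ) :=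
          le_csSup (hbdd (s₁ + s₂) (d + Δμ) (fun i => add_nonneg (hs₁ i) (hs₂ i))
              (fun k => add_nonneg (hd k) (hΔ k)))
            (Set.mem_image_of_mem (fun x => v ⬝ᵥ x - cP ⬝ᵥ (d + Δμ)) hmem)
        have heq : v ⬝ᵥ (x₁ + x₂) - cP ⬝ᵥ (d + Δμ) =
            (v ⬝ᵥ x₁ - cP ⬝ᵥ d) + (v ⬝ᵥ x₂ - cP ⬝ᵥ Δμ) := by
          rw [dotProduct_add, dotProduct_add]; ring
        rw [heq] at hval
        linarith
      linarith
    -- bddBelow facts for the inf over U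
    have hbbU : ∀ (s : Fin m → ℝ), (∀ i, 0 ≤ s i) →
        BddBelow ((recourseVal cP v RS RD s) '' U) := by
      intro s hs
      refine ⟨-(cP ⬝ᵥ dC), ?_⟩
      rintro y ⟨d, hd, rfl⟩
      have h1 := hreclb s d hs (hUpos d hd)
      have h2 := hCle d hd
      linarith
    have hbbU' : ∀ (s : Fin m → ℝ), (∀ i, 0 ≤ s i) →
        BddBelow ((fun d => recourseVal cP v RS RD s (d + Δμ)) '' U) := by
      intro s hs
      refine ⟨-(cP ⬝ᵥ dC) - cP ⬝ᵥ Δμ, ?_⟩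
      rintro y ⟨d, hd, rfl⟩
      show -(cP ⬝ᵥ dC) - cP ⬝ᵥ Δμ ≤ recourseVal cP v RS RD s (d + Δμ)
      have h1 := hreclb s (d + Δμ) hs (fun k => add_nonneg (hUpos d hd k) (hΔ k))
      have h2 := hCle d hd
      have h3 : cP ⬝ᵥ (d + Δμ) = cP ⬝ᵥ d + cP ⬝ᵥ Δμ := dotProduct_add _ _ _
      linarith
    unfold newsvendorVal
    by_cases hBb : BddAbove ((fun s => -((cS + cH) ⬝ᵥ s) +
        sInf ((recourseVal cP v RS RD s) '' ((fun d => d + Δμ) '' U))) ''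
        {s : Fin m → ℝ | ∀ i, 0 ≤ s i})
    · -- bounded case: elementwise comparison
      refine csSup_le ⟨_, Set.mem_image_of_mem _ (fun i => le_refl (0:ℝ))⟩ ?_
      rintro a ⟨s₁, hs₁, rfl⟩
      refine le_of_forall_pos_le_add ?_
      intro ε hε
      show -((cS + cH) ⬝ᵥ s₁) + sInf ((recourseVal cP v RS RD s₁) '' U) ≤
        sSup ((fun s => -((cS + cH) ⬝ᵥ s) +
          sInf ((recourseVal cP v RS RD s) '' ((fun d => d + Δμ) '' U))) ''
          {s : Fin m → ℝ | ∀ i, 0 ≤ s i}) + ε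
      -- get a good deterministic pair (s₂, x₂)
      have hDne : ((fun s => -((cS + cH) ⬝ᵥ s) +
          sInf ((recourseVal cP v RS RD s) '' ({Δμ} : Set (Fin n → ℝ)))) ''
          {s : Fin m → ℝ | ∀ i, 0 ≤ s i}).Nonempty :=
        ⟨_, Set.mem_image_of_mem _ (fun i => le_refl (0:ℝ))⟩
      have hlt : -(ε/2) < sSup ((fun s => -((cS + cH) ⬝ᵥ s) +
          sInf ((recourseVal cP v RS RD s) '' ({Δμ} : Set (Fin n → ℝ)))) ''
          {s : Fin m → ℝ | ∀ i, 0 ≤ s i}) :=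
        lt_of_lt_of_le (by linarith) hdet
      obtain ⟨y, ⟨s₂, hs₂, rfl⟩, hy⟩ := exists_lt_of_lt_csSup hDne hlt
      have hy' : -(ε/2) < -((cS + cH) ⬝ᵥ s₂) + recourseVal cP v RS RD s₂ Δμ := by
        simpa only [Set.image_singleton, csInf_singleton] using hy
      have hlt2 : recourseVal cP v RS RD s₂ Δμ - ε/2 < recourseVal cP v RS RD s₂ Δμ := by
        linarith
      obtain ⟨b, ⟨x₂, hx₂, rfl⟩, hb⟩ := exists_lt_of_lt_csSup (hImgne s₂ Δμ hs₂ hΔ) hlt2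
      have hb' : recourseVal cP v RS RD s₂ Δμ - ε/2 < v ⬝ᵥ x₂ - cP ⬝ᵥ Δμ := hb
      -- the shifted element of the RHS feasible set
      have hle : (-((cS + cH) ⬝ᵥ (s₁ + s₂)) +
          sInf ((recourseVal cP v RS RD (s₁ + s₂)) '' ((fun d => d + Δμ) '' U))) ≤
          sSup ((fun s => -((cS + cH) ⬝ᵥ s) +
            sInf ((recourseVal cP v RS RD s) '' ((fun d => d + Δμ) '' U))) ''
            {s : Fin m → ℝ | ∀ i, 0 ≤ s i}) :=
        le_csSup hBb (Set.mem_image_of_mem _ (fun i => add_nonneg (hs₁ i) (hs₂ i)))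
      have himg2 : (recourseVal cP v RS RD (s₁ + s₂)) '' ((fun d => d + Δμ) '' U) =
          (fun d => recourseVal cP v RS RD (s₁ + s₂) (d + Δμ)) '' U := Set.image_image _ _ _
      have hI : sInf ((recourseVal cP v RS RD s₁) '' U) + (v ⬝ᵥ x₂ - cP ⬝ᵥ Δμ) ≤
          sInf ((fun d => recourseVal cP v RS RD (s₁ + s₂) (d + Δμ)) '' U) := by
        refine le_csInf (hUne.image _) ?_
        rintro b ⟨d, hd, rfl⟩
        show sInf ((recourseVal cP v RS RD s₁) '' U) + (v ⬝ᵥ x₂ - cP ⬝ᵥ Δμ) ≤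
          recourseVal cP v RS RD (s₁ + s₂) (d + Δμ)
        have h1 : sInf ((recourseVal cP v RS RD s₁) '' U) ≤ recourseVal cP v RS RD s₁ d :=
          csInf_le (hbbU s₁ hs₁) (Set.mem_image_of_mem _ hd)
        have h2 := hsuper s₁ s₂ x₂ d hs₁ hs₂ (hUpos d hd) hx₂
        linarith
      rw [himg2] at hle
      have hsplit : (cS + cH) ⬝ᵥ (s₁ + s₂) = (cS + cH) ⬝ᵥ s₁ + (cS + cH) ⬝ᵥ s₂ :=
        dotProduct_add _ _ _
      rw [hsplit] at hle
      linarith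
    · -- unbounded case: the LHS set is also unbounded, both suprema are 0
      have hAnb : ¬ BddAbove ((fun s => -((cS + cH) ⬝ᵥ s) +
          sInf ((recourseVal cP v RS RD s) '' U)) '' {s : Fin m → ℝ | ∀ i, 0 ≤ s i}) := by
        rw [not_bddAbove_iff]
        obtain ⟨d₀, hd₀⟩ := id hUne
        have hkD : ∀ j : Fin p, ¬(∀ k, RD k j = 0) → ∃ k, 0 < RD k j := by
          intro j hj
          obtain ⟨k, hk⟩ := not_forall.mp hj
          exact ⟨k, (hRD k j).lt_of_ne (Ne.symm hk)⟩
        choose κ hκ using hkD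
        set K : ℝ := ∑ j, if h : ∀ k, RD k j = 0 then 0
          else v j * ((d₀ (κ j h) + Δμ (κ j h)) / RD (κ j h) j) with hKdef
        intro M
        obtain ⟨b, ⟨s, hs, rfl⟩, hbM⟩ :=
          (not_bddAbove_iff.mp hBb) (M + K + cP ⬝ᵥ dC + 1)
        have hbM' : M + K + cP ⬝ᵥ dC + 1 < -((cS + cH) ⬝ᵥ s) +
            sInf ((recourseVal cP v RS RD s) '' ((fun d => d + Δμ) '' U)) := hbM
        have himg2 : (recourseVal cP v RS RD s) '' ((fun d => d + Δμ) '' U) =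
            (fun d => recourseVal cP v RS RD s (d + Δμ)) '' U := Set.image_image _ _ _
        rw [himg2] at hbM'
        have h4 : sInf ((fun d => recourseVal cP v RS RD s (d + Δμ)) '' U) ≤
            recourseVal cP v RS RD s (d₀ + Δμ) :=
          csInf_le (hbbU' s hs) (Set.mem_image_of_mem _ hd₀)
        have hdne : (∀ k, 0 ≤ (d₀ + Δμ) k) := fun k => add_nonneg (hUpos d₀ hd₀ k) (hΔ k)
        have h5 : recourseVal cP v RS RD s (d₀ + Δμ) - 1 <
            recourseVal cP v RS RD s (d₀ + Δμ) := by linarith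
        obtain ⟨bx, ⟨x, hx, rfl⟩, hbx⟩ := exists_lt_of_lt_csSup (hImgne s (d₀ + Δμ) hs hdne) h5
        have hbx' : recourseVal cP v RS RD s (d₀ + Δμ) - 1 < v ⬝ᵥ x - cP ⬝ᵥ (d₀ + Δμ) := hbx
        -- the truncated production plan
        set x' : Fin p → ℝ := fun j => if ∀ k, RD k j = 0 then x j else 0 with hx'def
        have hx'nn : ∀ j, 0 ≤ x' j := by
          intro j
          by_cases h : ∀ k, RD k j = 0 <;> simp [hx'def, h, hx.1 j]
        have hx'le : ∀ j, x' j ≤ x j := by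
          intro j
          by_cases h : ∀ k, RD k j = 0 <;> simp [hx'def, h, hx.1 j]
        have hvx' : v ⬝ᵥ x ≤ v ⬝ᵥ x' + K := by
          have hterm : ∀ j ∈ Finset.univ, v j * x j ≤ v j * x' j +
              (if h : ∀ k, RD k j = 0 then 0
                else v j * ((d₀ (κ j h) + Δμ (κ j h)) / RD (κ j h) j)) := by
            intro j _
            by_cases h : ∀ k, RD k j = 0
            · simp [hx'def, h]
            · have hkj := hκ j h
              have h6 : RD (κ j h) j * x j ≤ d₀ (κ j h) + Δμ (κ j h) :=
                le_trans (Finset.single_le_sum (f := fun j' => RD (κ j h) j' * x j')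
                  (fun j' _ => mul_nonneg (hRD _ j') (hx.1 j')) (Finset.mem_univ j))
                  (hx.2.2 (κ j h))
              have h7 : x j ≤ (d₀ (κ j h) + Δμ (κ j h)) / RD (κ j h) j :=
                (le_div_iff₀ hkj).mpr (by linarith [mul_comm (x j) (RD (κ j h) j)])
              have h8 := mul_le_mul_of_nonneg_left h7 (hv j)
              have hx'j : x' j = 0 := by simp only [hx'def]; exact if_neg h
              rw [dif_neg h, hx'j, mul_zero, zero_add]
              exact h8
          have hsum := Finset.sum_le_sum hterm
          rw [Finset.sum_add_distrib] at hsum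
          exact hsum
        have hx'F : ∀ d ∈ U, x' ∈ {z : Fin p → ℝ | (∀ j, 0 ≤ z j) ∧
            RS.mulVec z ≤ s ∧ RD.mulVec z ≤ d} := by
          intro d hd
          refine ⟨hx'nn, ?_, ?_⟩
          · refine le_trans ?_ hx.2.1
            intro i
            show (∑ j, RS i j * x' j) ≤ ∑ j, RS i j * x j
            exact Finset.sum_le_sum fun j _ => mul_le_mul_of_nonneg_left (hx'le j) (hRS i j)
          · intro k
            have hz : RD.mulVec x' k = 0 := by
              show (∑ j, RD k j * x' j) = 0
              apply Finset.sum_eq_zero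
              intro j _
              by_cases h : ∀ k', RD k' j = 0
              · simp [hx'def, h, h k]
              · simp [hx'def, h]
            calc RD.mulVec x' k ≤ 0 := le_of_eq hz
              _ ≤ d k := hUpos d hd k
        refine ⟨-((cS + cH) ⬝ᵥ s) + sInf ((recourseVal cP v RS RD s) '' U),
          Set.mem_image_of_mem _ hs, ?_⟩
        have hI1 : v ⬝ᵥ x' - cP ⬝ᵥ dC ≤ sInf ((recourseVal cP v RS RD s) '' U) := by
          refine le_csInf (hUne.image _) ?_
          rintro y ⟨d, hd, rfl⟩
          have h9 : v ⬝ᵥ x' - cP ⬝ᵥ d ≤ recourseVal cP v RS RD s d :=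
            le_csSup (hbdd s d hs (hUpos d hd))
              (Set.mem_image_of_mem (fun z => v ⬝ᵥ z - cP ⬝ᵥ d) (hx'F d hd))
          have h10 := hCle d hd
          linarith
        have h11 : 0 ≤ cP ⬝ᵥ (d₀ + Δμ) := hdp _ _ hcP hdne
        linarith
      rw [Real.sSup_of_not_bddAbove hAnb, Real.sSup_of_not_bddAbove hBb]
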